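/- Let Ω ⊆ ℝ^d be a bounded domain, (fₙ) a bounded sequence in L²(Ω) with fₙ ⇀ f weakly in L², and φₙ, φ : Ω → Ω measure-preserving-up-to-bounded-Jacobian C¹-diffeomorphisms with φₙ → φ and Dφₙ → Dφ uniformly, with |det Dφₙ| uniformly bounded above and below by positive constants. Then fₙ ∘ φₙ ⇀ f ∘ φ weakly in L²(Ω). -/

import Mathlib

open Filter Topology MeasureTheory
open scoped ENNReal


open Filter Topology MeasureTheory
open scoped ENNReal

section Helpers

variable {α : Type*} [MeasurableSpace α] {μ : Measure α}

/-- Cauchy-Schwarz for integrals of products of L² functions. -/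
lemma holder_two {u v : α → ℝ} (hu : MemLp u 2 μ) (hv : MemLp v 2 μ) :
    |∫ x, u x * v x ∂μ| ≤ (eLpNorm u 2 μ).toReal * (eLpNorm v 2 μ).toReal := by
  have h2 : ENNReal.ofReal (2:ℝ) = 2 := by norm_num
  have hpq : Real.HolderConjugate 2 2 := Real.HolderConjugate.two_two
  have hu2 : MemLp u (ENNReal.ofReal (2:ℝ)) μ := by rwa [h2]
  have hv2 : MemLp v (ENNReal.ofReal (2:ℝ)) μ := by rwa [h2]
  have h1 : |∫ x, u x * v x ∂μ| ≤ ∫ x, ‖u x‖ * ‖v x‖ ∂μ := by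
    calc |∫ x, u x * v x ∂μ| ≤ ∫ x, ‖u x * v x‖ ∂μ := by
          simpa [Real.norm_eq_abs] using
            norm_integral_le_integral_norm (μ := μ) (fun x => u x * v x)
      _ = ∫ x, ‖u x‖ * ‖v x‖ ∂μ := by simp_rw [norm_mul]
  have h3 := integral_mul_norm_le_Lp_mul_Lq (μ := μ) hpq hu2 hv2
  have hnu : (eLpNorm u 2 μ).toReal = (∫ x, ‖u x‖ ^ (2:ℝ) ∂μ) ^ (2:ℝ)⁻¹ := by
    rw [hu.eLpNorm_eq_integral_rpow_norm two_ne_zero ENNReal.ofNat_ne_top]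
    rw [ENNReal.toReal_ofReal (by positivity)]
    norm_num
  have hnv : (eLpNorm v 2 μ).toReal = (∫ x, ‖v x‖ ^ (2:ℝ) ∂μ) ^ (2:ℝ)⁻¹ := by
    rw [hv.eLpNorm_eq_integral_rpow_norm two_ne_zero ENNReal.ofNat_ne_top]
    rw [ENNReal.toReal_ofReal (by positivity)]
    norm_num
  rw [hnu, hnv]
  refine h1.trans ?_
  simpa [one_div] using h3

/-- Product of two L² functions is integrable. -/
lemma integrable_mul_of_memℒp_two {u v : α → ℝ} (hu : MemLp u 2 μ) (hv : MemLp v 2 μ) :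
    Integrable (fun x => u x * v x) μ := by
  have h : MemLp (u • v) 1 μ := hv.smul hu
  rw [← memLp_one_iff_integrable]
  simpa [Pi.smul_apply, smul_eq_mul, Pi.mul_def] using h

end Helpers


open Filter Topology MeasureTheory Set
open scoped ENNReal

section CoV

variable {d : ℕ} {Ω : Set (EuclideanSpace ℝ (Fin d))}

/-- Change of variables for a C¹ bijection of `Ω`. -/
lemma cov_real (hΩm : MeasurableSet Ω) {T : EuclideanSpace ℝ (Fin d) → EuclideanSpace ℝ (Fin d)}
    (hT : ContDiff ℝ 1 T) (hbij : Set.BijOn T Ω Ω) (F : EuclideanSpace ℝ (Fin d) → ℝ) :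
    ∫ y in Ω, F y = ∫ x in Ω, |(fderiv ℝ T x).det| * F (T x) := by
  have hd : ∀ x ∈ Ω, HasFDerivWithinAt T (fderiv ℝ T x) Ω x := fun x _ =>
    ((hT.differentiable one_ne_zero) x).hasFDerivAt.hasFDerivWithinAt
  have := integral_image_eq_integral_abs_det_fderiv_smul volume hΩm hd hbij.injOn F
  rw [hbij.image_eq] at this
  simpa [smul_eq_mul] using this

lemma cov_lintegral (hΩm : MeasurableSet Ω)
    {T : EuclideanSpace ℝ (Fin d) → EuclideanSpace ℝ (Fin d)}
    (hT : ContDiff ℝ 1 T) (hbij : Set.BijOn T Ω Ω) (F : EuclideanSpace ℝ (Fin d) → ℝ≥0∞) :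
    ∫⁻ y in Ω, F y = ∫⁻ x in Ω, ENNReal.ofReal |(fderiv ℝ T x).det| * F (T x) := by
  have hd : ∀ x ∈ Ω, HasFDerivWithinAt T (fderiv ℝ T x) Ω x := fun x _ =>
    ((hT.differentiable one_ne_zero) x).hasFDerivAt.hasFDerivWithinAt
  have := lintegral_image_eq_lintegral_abs_det_fderiv_mul volume hΩm hd hbij.injOn F
  rwa [hbij.image_eq] at this

/-- A C¹ bijection of `Ω` with Jacobian bounded below is quasi measure preserving on `Ω`. -/
lemma qmp_aux (hΩm : MeasurableSet Ω)
    {T : EuclideanSpace ℝ (Fin d) → EuclideanSpace ℝ (Fin d)}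
    (hT : ContDiff ℝ 1 T) (hbij : Set.BijOn T Ω Ω) {c : ℝ} (hc : 0 < c)
    (hJ : ∀ x ∈ Ω, c ≤ |(fderiv ℝ T x).det|) :
    Measure.QuasiMeasurePreserving T (volume.restrict Ω) (volume.restrict Ω) := by
  refine ⟨hT.continuous.measurable, Measure.AbsolutelyContinuous.mk fun A hA hA0 => ?_⟩
  rw [Measure.map_apply hT.continuous.measurable hA,
    Measure.restrict_apply (hT.continuous.measurable hA)]
  rw [Measure.restrict_apply hA] at hA0
  have key := cov_lintegral hΩm hT hbij (A.indicator (fun _ => (1:ℝ≥0∞)))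
  have hL : ∫⁻ y in Ω, A.indicator (fun _ => (1:ℝ≥0∞)) y = 0 := by
    rw [lintegral_indicator hA, setLIntegral_one, Measure.restrict_apply hA, hA0]
  have hR : ENNReal.ofReal c * volume (T ⁻¹' A ∩ Ω) ≤
      ∫⁻ x in Ω, ENNReal.ofReal |(fderiv ℝ T x).det| * A.indicator (fun _ => (1:ℝ≥0∞)) (T x) := by
    have h1 : ∫⁻ x in Ω, ENNReal.ofReal c * (T ⁻¹' A).indicator (fun _ => (1:ℝ≥0∞)) x ≤
        ∫⁻ x in Ω, ENNReal.ofReal |(fderiv ℝ T x).det| * A.indicator (fun _ => (1:ℝ≥0∞)) (T x) := by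
      refine lintegral_mono_ae ?_
      filter_upwards [ae_restrict_mem hΩm] with x hx
      have h2 : A.indicator (fun _ => (1:ℝ≥0∞)) (T x) =
          (T ⁻¹' A).indicator (fun _ => (1:ℝ≥0∞)) x := by
        by_cases h : T x ∈ A <;> simp [Set.indicator, h, Set.mem_preimage]
      rw [h2]
      exact mul_le_mul_left (ENNReal.ofReal_le_ofReal (hJ x hx)) _
    calc ENNReal.ofReal c * volume (T ⁻¹' A ∩ Ω)
        = ENNReal.ofReal c * ∫⁻ x in Ω, (T ⁻¹' A).indicator (fun _ => (1:ℝ≥0∞)) x := by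
          rw [lintegral_indicator (hT.continuous.measurable hA), setLIntegral_one,
            Measure.restrict_apply (hT.continuous.measurable hA)]
      _ = ∫⁻ x in Ω, ENNReal.ofReal c * (T ⁻¹' A).indicator (fun _ => (1:ℝ≥0∞)) x := by
          rw [lintegral_const_mul' _ _ ENNReal.ofReal_ne_top]
      _ ≤ _ := h1
  rw [← key, hL] at hR
  have hc0 : ENNReal.ofReal c ≠ 0 := by simp [hc, hc.le]
  have := le_antisymm (le_zero_iff.mp hR |>.le) (zero_le)
  rcases (mul_eq_zero.mp (le_zero_iff.mp hR)) with h | h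
  · exact absurd h hc0
  · exact h

/-- Composition with a C¹ bijection stays in L², with norm control. -/
lemma memLp_comp_aux (hΩm : MeasurableSet Ω)
    {T : EuclideanSpace ℝ (Fin d) → EuclideanSpace ℝ (Fin d)}
    (hT : ContDiff ℝ 1 T) (hbij : Set.BijOn T Ω Ω) {c : ℝ} (hc : 0 < c)
    (hJ : ∀ x ∈ Ω, c ≤ |(fderiv ℝ T x).det|)
    {u : EuclideanSpace ℝ (Fin d) → ℝ} (hu : MemLp u 2 (volume.restrict Ω)) :
    MemLp (fun x => u (T x)) 2 (volume.restrict Ω) ∧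
      eLpNorm (fun x => u (T x)) 2 (volume.restrict Ω) ≤
        (ENNReal.ofReal c)⁻¹ ^ (2:ℝ)⁻¹ * eLpNorm u 2 (volume.restrict Ω) := by
  have hqmp := qmp_aux hΩm hT hbij hc hJ
  have asm : AEStronglyMeasurable (fun x => u (T x)) (volume.restrict Ω) :=
    hu.aestronglyMeasurable.comp_quasiMeasurePreserving hqmp
  have hc0 : ENNReal.ofReal c ≠ 0 := by simp [hc, hc.le]
  set Q : (EuclideanSpace ℝ (Fin d) → ℝ) → ℝ≥0∞ :=
    fun v => ∫⁻ x in Ω, (‖v x‖₊ : ℝ≥0∞) ^ (2:ℝ) with hQ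
  have key := cov_lintegral hΩm hT hbij (fun y => (‖u y‖₊ : ℝ≥0∞) ^ (2:ℝ))
  have hmono : ENNReal.ofReal c * Q (fun x => u (T x)) ≤ Q u := by
    rw [hQ]
    simp only
    rw [key, ← lintegral_const_mul' _ _ ENNReal.ofReal_ne_top]
    refine lintegral_mono_ae ?_
    filter_upwards [ae_restrict_mem hΩm] with x hx
    exact mul_le_mul_left (ENNReal.ofReal_le_ofReal (hJ x hx)) _
  have hQle : Q (fun x => u (T x)) ≤ (ENNReal.ofReal c)⁻¹ * Q u := by
    calc Q (fun x => u (T x))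
        = (ENNReal.ofReal c)⁻¹ * (ENNReal.ofReal c * Q (fun x => u (T x))) := by
          rw [← mul_assoc, ENNReal.inv_mul_cancel hc0 ENNReal.ofReal_ne_top, one_mul]
      _ ≤ (ENNReal.ofReal c)⁻¹ * Q u := mul_le_mul_right hmono _
  have help : ∀ v : EuclideanSpace ℝ (Fin d) → ℝ,
      eLpNorm v 2 (volume.restrict Ω) = (Q v) ^ (2:ℝ)⁻¹ := by
    intro v
    rw [eLpNorm_eq_lintegral_rpow_enorm_toReal two_ne_zero ENNReal.ofNat_ne_top]
    norm_num [hQ]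
    simp [enorm_eq_nnnorm]
  have hbound : eLpNorm (fun x => u (T x)) 2 (volume.restrict Ω) ≤
      (ENNReal.ofReal c)⁻¹ ^ (2:ℝ)⁻¹ * eLpNorm u 2 (volume.restrict Ω) := by
    rw [help, help]
    calc (Q (fun x => u (T x))) ^ (2:ℝ)⁻¹
        ≤ ((ENNReal.ofReal c)⁻¹ * Q u) ^ (2:ℝ)⁻¹ :=
          ENNReal.rpow_le_rpow hQle (by norm_num)
      _ = (ENNReal.ofReal c)⁻¹ ^ (2:ℝ)⁻¹ * (Q u) ^ (2:ℝ)⁻¹ :=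
          ENNReal.mul_rpow_of_nonneg _ _ (by norm_num)
  refine ⟨⟨asm, ?_⟩, hbound⟩
  refine lt_of_le_of_lt hbound ?_
  refine ENNReal.mul_lt_top ?_ hu.eLpNorm_lt_top
  exact ENNReal.rpow_lt_top_of_nonneg (by norm_num) (by simp [hc0])

end CoV


open Filter Topology MeasureTheory Set
open scoped ENNReal

section Inv

variable {d : ℕ} {Ω : Set (EuclideanSpace ℝ (Fin d))}

/-- The set inverse of a C¹ bijection of an open set `Ω` with nonvanishing Jacobian is
continuous at every point of `Ω`. -/
lemma invFunOn_continuousAt (hΩopen : IsOpen Ω)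
    {φ : EuclideanSpace ℝ (Fin d) → EuclideanSpace ℝ (Fin d)}
    (hφc : ContDiff ℝ 1 φ) (hbij : Set.BijOn φ Ω Ω) {c : ℝ} (hc : 0 < c)
    (hJ : ∀ x ∈ Ω, c ≤ |(fderiv ℝ φ x).det|) :
    ∀ y ∈ Ω, ContinuousAt (Function.invFunOn φ Ω) y := by
  intro y hy
  set ψ := Function.invFunOn φ Ω with hψ
  have hinv : Set.InvOn ψ φ Ω Ω := hbij.invOn_invFunOn
  have hψmaps : Set.MapsTo ψ Ω Ω := hbij.surjOn.mapsTo_invFunOn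
  set x := ψ y with hx
  have hxΩ : x ∈ Ω := hψmaps hy
  have hφx : φ x = y := hinv.2 hy
  have hdet : (fderiv ℝ φ x).det ≠ 0 := by
    intro h
    have := hJ x hxΩ
    rw [h] at this
    simp at this
    linarith
  let A : EuclideanSpace ℝ (Fin d) ≃ₗ[ℝ] EuclideanSpace ℝ (Fin d) :=
    LinearMap.equivOfDetNeZero _ hdet
  let B := A.toContinuousLinearEquiv
  have hB : (B : EuclideanSpace ℝ (Fin d) →L[ℝ] EuclideanSpace ℝ (Fin d)) = fderiv ℝ φ x := by
    ext v
    rfl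
  have hsd : HasStrictFDerivAt φ
      (B : EuclideanSpace ℝ (Fin d) →L[ℝ] EuclideanSpace ℝ (Fin d)) x := by
    rw [hB]
    exact (hφc.contDiffAt).hasStrictFDerivAt one_ne_zero
  set e := hsd.toOpenPartialHomeomorph φ with he
  have hcoe : ⇑e = φ := hsd.toOpenPartialHomeomorph_coe
  set e' := e.restrOpen Ω hΩopen with he'
  have hcoe' : ⇑e' = φ := hcoe
  have hsrc : x ∈ e'.source := by
    rw [OpenPartialHomeomorph.restrOpen_source]
    exact ⟨hsd.mem_toOpenPartialHomeomorph_source, hxΩ⟩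
  have hsub : e'.source ⊆ Ω := by
    rw [OpenPartialHomeomorph.restrOpen_source]
    exact Set.inter_subset_right
  have hy' : y ∈ e'.target := by
    have := e'.map_source hsrc
    rwa [hcoe', hφx] at this
  have heq : ∀ z ∈ e'.target, ψ z = e'.symm z := by
    intro z hz
    have h1 : e'.symm z ∈ e'.source := e'.map_target hz
    have h2 : φ (e'.symm z) = z := by
      have := e'.right_inv hz
      rwa [hcoe'] at this
    have h3 : e'.symm z ∈ Ω := hsub h1
    have hzΩ : z ∈ Ω := h2 ▸ hbij.mapsTo h3
    exact hbij.injOn (hψmaps hzΩ) h3 (by rw [hinv.2 hzΩ, h2])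
  have hev : e'.symm =ᶠ[𝓝 y] ψ :=
    eventually_of_mem (e'.open_target.mem_nhds hy') (fun z hz => (heq z hz).symm)
  exact (e'.continuousAt_symm hy').congr hev

end Inv


open Filter Topology MeasureTheory
open scoped ENNReal

section BS

variable {α : Type*} [MeasurableSpace α] {μ : Measure α}

/-- A weakly convergent sequence in L² is norm bounded (Banach–Steinhaus). -/
lemma weak_norm_bound {f : ℕ → α → ℝ} {flim : α → ℝ}
    (hfmem : ∀ n, MemLp (f n) 2 μ) (hflim : MemLp flim 2 μ)
    (hweak : ∀ g : α → ℝ, MemLp g 2 μ →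
      Tendsto (fun n => ∫ x, f n x * g x ∂μ) atTop (𝓝 (∫ x, flim x * g x ∂μ))) :
    ∃ M : ℝ, 0 ≤ M ∧ ∀ n, (eLpNorm (f n) 2 μ).toReal ≤ M := by
  set F : ℕ → Lp ℝ 2 μ := fun n => (hfmem n).toLp (f n) with hF
  set T : ℕ → Lp ℝ 2 μ →L[ℝ] ℝ := fun n => innerSL ℝ (F n) with hT
  have hpt : ∀ G : Lp ℝ 2 μ, ∃ C, ∀ n, ‖T n G‖ ≤ C := by
    intro G
    have heq : ∀ n, T n G = ∫ x, f n x * (G : α → ℝ) x ∂μ := by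
      intro n
      have h1 : T n G = ∫ x, (F n : α → ℝ) x * (G : α → ℝ) x ∂μ := by
        rw [hT]
        simp only [innerSL_apply_apply]
        rw [MeasureTheory.L2.inner_def]
        simp [RCLike.inner_apply, mul_comm]
      rw [h1]
      refine integral_congr_ae ?_
      filter_upwards [MemLp.coeFn_toLp (hfmem n)] with x hx
      rw [hx]
    have hconv := hweak (G : α → ℝ) (Lp.memLp G)
    have habs : Tendsto (fun n => |∫ x, f n x * (G : α → ℝ) x ∂μ|) atTop
        (𝓝 |∫ x, flim x * (G : α → ℝ) x ∂μ|) := hconv.abs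
    obtain ⟨b, hb⟩ := habs.bddAbove_range
    refine ⟨b, fun n => ?_⟩
    rw [heq n, Real.norm_eq_abs]
    exact hb (Set.mem_range_self n)
  obtain ⟨C', hC'⟩ := banach_steinhaus hpt
  refine ⟨max C' 0, le_max_right _ _, fun n => ?_⟩
  have h1 : ‖T n‖ = ‖F n‖ := innerSL_apply_norm _ _
  have h2 : ‖F n‖ = (eLpNorm (f n) 2 μ).toReal := Lp.norm_toLp _ _
  calc (eLpNorm (f n) 2 μ).toReal = ‖T n‖ := by rw [h1, h2]
    _ ≤ C' := hC' n
    _ ≤ max C' 0 := le_max_left _ _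

end BS

set_option maxHeartbeats 2000000 in
/-- If `fₙ ⇀ f` weakly in `L²(Ω)` with `(fₙ)` bounded, and `φₙ → φ`, `Dφₙ → Dφ`
uniformly with Jacobians uniformly bounded above and below, then
`fₙ ∘ φₙ ⇀ f ∘ φ` weakly in `L²(Ω)`. -/
theorem composed_weak_convergence_L2
    {d : ℕ} (Ω : Set (EuclideanSpace ℝ (Fin d)))
    (hΩopen : IsOpen Ω) (hΩbdd : Bornology.IsBounded Ω)
    (f : ℕ → EuclideanSpace ℝ (Fin d) → ℝ) (flim : EuclideanSpace ℝ (Fin d) → ℝ)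
    (hfmem : ∀ n, MemLp (f n) 2 (volume.restrict Ω))
    (hflim : MemLp flim 2 (volume.restrict Ω))
    (hfbdd : ∃ M : ℝ≥0∞, ∀ n, eLpNorm (f n) 2 (volume.restrict Ω) ≤ M)
    (hweak : ∀ g : EuclideanSpace ℝ (Fin d) → ℝ, MemLp g 2 (volume.restrict Ω) →
      Tendsto (fun n => ∫ x in Ω, f n x * g x) atTop (nhds (∫ x in Ω, flim x * g x)))
    (φn : ℕ → EuclideanSpace ℝ (Fin d) → EuclideanSpace ℝ (Fin d))
    (φ : EuclideanSpace ℝ (Fin d) → EuclideanSpace ℝ (Fin d))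
    (hφn : ∀ n, ContDiff ℝ 1 (φn n) ∧ Set.BijOn (φn n) Ω Ω)
    (hφ : ContDiff ℝ 1 φ ∧ Set.BijOn φ Ω Ω)
    (hconv : TendstoUniformlyOn φn φ atTop Ω)
    (hconvD : TendstoUniformlyOn (fun n x => fderiv ℝ (φn n) x) (fun x => fderiv ℝ φ x)
      atTop Ω)
    (c C : ℝ) (hc : 0 < c)
    (hJac : ∀ n, ∀ x ∈ Ω, c ≤ |(fderiv ℝ (φn n) x).det| ∧ |(fderiv ℝ (φn n) x).det| ≤ C)
    (hJaclim : ∀ x ∈ Ω, c ≤ |(fderiv ℝ φ x).det| ∧ |(fderiv ℝ φ x).det| ≤ C) :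
    ∀ g : EuclideanSpace ℝ (Fin d) → ℝ, MemLp g 2 (volume.restrict Ω) →
      Tendsto (fun n => ∫ x in Ω, f n (φn n x) * g x) atTop
        (nhds (∫ x in Ω, flim (φ x) * g x)) := by
  classical
  have hΩm : MeasurableSet Ω := hΩopen.measurableSet
  have hfin : volume Ω < ⊤ := hΩbdd.measure_lt_top
  haveI : IsFiniteMeasure (volume.restrict Ω) := ⟨by rwa [Measure.restrict_apply_univ]⟩
  -- the inverse of φ on Ω
  set ψ := Function.invFunOn φ Ω with hψdef
  have hinv : Set.InvOn ψ φ Ω Ω := hφ.2.invOn_invFunOn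
  have hψmaps : Set.MapsTo ψ Ω Ω := hφ.2.surjOn.mapsTo_invFunOn
  have hψcont : ∀ y ∈ Ω, ContinuousAt ψ y :=
    invFunOn_continuousAt hΩopen hφ.1 hφ.2 hc (fun x hx => (hJaclim x hx).1)
  have hψaem : AEMeasurable ψ (volume.restrict Ω) :=
    ContinuousOn.aemeasurable (fun y hy => (hψcont y hy).continuousWithinAt) hΩm
  -- uniform bound on the norms
  obtain ⟨M₀, hM₀0, hM₀⟩ := weak_norm_bound hfmem hflim hweak
  have hfne : ∀ n, eLpNorm (f n) 2 (volume.restrict Ω) ≠ ⊤ := fun n => (hfmem n).eLpNorm_ne_top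
  have hfM : ∀ n, eLpNorm (f n) 2 (volume.restrict Ω) ≤ ENNReal.ofReal M₀ := fun n =>
    (ENNReal.le_ofReal_iff_toReal_le (hfne n) hM₀0).mpr (hM₀ n)
  -- composition facts
  have hJn : ∀ n, ∀ x ∈ Ω, c ≤ |(fderiv ℝ (φn n) x).det| := fun n x hx => (hJac n x hx).1
  have hqmp : ∀ n, Measure.QuasiMeasurePreserving (φn n) (volume.restrict Ω)
      (volume.restrict Ω) := fun n => qmp_aux hΩm (hφn n).1 (hφn n).2 hc (hJn n)
  set κ : ℝ := ((ENNReal.ofReal c)⁻¹ ^ (2:ℝ)⁻¹).toReal with hκ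
  have hκ0 : 0 ≤ κ := ENNReal.toReal_nonneg
  have hκne : (ENNReal.ofReal c)⁻¹ ^ (2:ℝ)⁻¹ ≠ ⊤ := by
    refine (ENNReal.rpow_lt_top_of_nonneg (by norm_num) ?_).ne
    simp [(by simp [hc, hc.le] : ENNReal.ofReal c ≠ 0)]
  have humem : ∀ n, MemLp (fun x => f n (φn n x)) 2 (volume.restrict Ω) := fun n =>
    (memLp_comp_aux hΩm (hφn n).1 (hφn n).2 hc (hJn n) (hfmem n)).1
  have huB : ∀ n, (eLpNorm (fun x => f n (φn n x)) 2 (volume.restrict Ω)).toReal ≤ κ * M₀ := by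
    intro n
    have h1 := (memLp_comp_aux hΩm (hφn n).1 (hφn n).2 hc (hJn n) (hfmem n)).2
    have h2 : eLpNorm (fun x => f n (φn n x)) 2 (volume.restrict Ω) ≤
        (ENNReal.ofReal c)⁻¹ ^ (2:ℝ)⁻¹ * ENNReal.ofReal M₀ :=
      h1.trans (mul_le_mul_right (hfM n) _)
    have h3 := ENNReal.toReal_mono (by
      exact ENNReal.mul_ne_top hκne ENNReal.ofReal_ne_top) h2
    rwa [ENNReal.toReal_mul, ENNReal.toReal_ofReal hM₀0] at h3
  have hflimcomp : MemLp (fun x => flim (φ x)) 2 (volume.restrict Ω) :=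
    (memLp_comp_aux hΩm hφ.1 hφ.2 hc (fun x hx => (hJaclim x hx).1) hflim).1
  set Kl : ℝ := (eLpNorm (fun x => flim (φ x)) 2 (volume.restrict Ω)).toReal with hKl
  have hKl0 : 0 ≤ Kl := ENNReal.toReal_nonneg
  -- Main convergence for bounded continuous test functions
  have KEY : ∀ g₀ : BoundedContinuousFunction (EuclideanSpace ℝ (Fin d)) ℝ,
      Tendsto (fun n => ∫ x in Ω, f n (φn n x) * g₀ x) atTop
        (𝓝 (∫ x in Ω, flim (φ x) * g₀ x)) := by
    intro g₀
    set G : EuclideanSpace ℝ (Fin d) → ℝ :=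
      fun y => g₀ (ψ y) * |(fderiv ℝ φ (ψ y)).det|⁻¹ with hGdef
    have hdetpos : ∀ x ∈ Ω, 0 < |(fderiv ℝ φ x).det| := fun x hx =>
      lt_of_lt_of_le hc (hJaclim x hx).1
    have hGpt : ∀ y ∈ Ω, ‖G y‖ ≤ ‖g₀‖ * c⁻¹ := by
      intro y hy
      have h1 : ψ y ∈ Ω := hψmaps hy
      have h2 : |(fderiv ℝ φ (ψ y)).det|⁻¹ ≤ c⁻¹ := by
        apply inv_anti₀ hc (hJaclim _ h1).1
      have h3 : (0:ℝ) ≤ |(fderiv ℝ φ (ψ y)).det|⁻¹ := by positivity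
      have h4 : |g₀ (ψ y)| ≤ ‖g₀‖ := by
        simpa [Real.norm_eq_abs] using g₀.norm_coe_le_norm (ψ y)
      rw [hGdef]
      simp only [Real.norm_eq_abs, abs_mul, abs_inv, abs_abs]
      exact mul_le_mul h4 h2 h3 (norm_nonneg _)
    have hGmeasOuter : Measurable (fun p => (g₀ p : ℝ) * |(fderiv ℝ φ p).det|⁻¹) := by
      apply Measurable.mul g₀.continuous.measurable
      exact ((ContinuousLinearMap.continuous_det.comp
        (hφ.1.continuous_fderiv one_ne_zero)).abs.measurable).inv
    have hGasm : AEStronglyMeasurable G (volume.restrict Ω) :=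
      (hGmeasOuter.comp_aemeasurable hψaem).aestronglyMeasurable
    have hGbd : ∀ᵐ y ∂(volume.restrict Ω), ‖G y‖ ≤ ‖g₀‖ * c⁻¹ := by
      filter_upwards [ae_restrict_mem hΩm] with y hy using hGpt y hy
    have hGmem : MemLp G 2 (volume.restrict Ω) := MemLp.of_bound hGasm _ hGbd
    -- change of variables identity for the limit
    have hLG : ∫ y in Ω, flim y * G y = ∫ x in Ω, flim (φ x) * g₀ x := by
      rw [cov_real hΩm hφ.1 hφ.2 (fun y => flim y * G y)]
      refine setIntegral_congr_fun hΩm (fun x hx => ?_)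
      have h1 : ψ (φ x) = x := hinv.1 hx
      have h2 : |(fderiv ℝ φ x).det| ≠ 0 := ne_of_gt (hdetpos x hx)
      simp only [hGdef, h1]
      field_simp
    -- auxiliary functions
    have hg₀mem : MemLp (fun x => (g₀ x : ℝ)) 2 (volume.restrict Ω) :=
      MemLp.of_bound g₀.continuous.aestronglyMeasurable ‖g₀‖
        (Filter.Eventually.of_forall fun x => g₀.norm_coe_le_norm x)
    have hGcompasm : ∀ n, AEStronglyMeasurable (fun x => G (φn n x)) (volume.restrict Ω) :=
      fun n => hGasm.comp_quasiMeasurePreserving (hqmp n)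
    have hwasm : ∀ n, AEStronglyMeasurable
        (fun x => |(fderiv ℝ (φn n) x).det| * G (φn n x)) (volume.restrict Ω) := fun n =>
      ((ContinuousLinearMap.continuous_det.comp
        ((hφn n).1.continuous_fderiv one_ne_zero)).abs.aestronglyMeasurable).mul (hGcompasm n)
    have hwbd : ∀ n, ∀ᵐ x ∂(volume.restrict Ω),
        ‖|(fderiv ℝ (φn n) x).det| * G (φn n x)‖ ≤ C * (‖g₀‖ * c⁻¹) := by
      intro n
      filter_upwards [ae_restrict_mem hΩm] with x hx
      have h1 : φn n x ∈ Ω := (hφn n).2.mapsTo hx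
      have hC0 : (0:ℝ) ≤ C := hc.le.trans ((hJac n x hx).1.trans (hJac n x hx).2)
      rw [norm_mul]
      refine mul_le_mul ?_ (hGpt _ h1) (norm_nonneg _) hC0
      rw [Real.norm_eq_abs, abs_abs]
      exact (hJac n x hx).2
    have hwmem : ∀ n, MemLp (fun x => |(fderiv ℝ (φn n) x).det| * G (φn n x)) 2
        (volume.restrict Ω) := fun n => MemLp.of_bound (hwasm n) _ (hwbd n)
    have hvmem : ∀ n, MemLp
        (fun x => g₀ x - |(fderiv ℝ (φn n) x).det| * G (φn n x)) 2 (volume.restrict Ω) :=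
      fun n => hg₀mem.sub (hwmem n)
    -- identity: pull the weak pairing through the change of variables
    have hIdent : ∀ n, ∫ y in Ω, f n y * G y =
        ∫ x in Ω, f n (φn n x) * (|(fderiv ℝ (φn n) x).det| * G (φn n x)) := by
      intro n
      rw [cov_real hΩm (hφn n).1 (hφn n).2 (fun y => f n y * G y)]
      refine setIntegral_congr_fun hΩm (fun x hx => ?_)
      ring
    have hint1 : ∀ n, Integrable (fun x => f n (φn n x) * g₀ x) (volume.restrict Ω) :=
      fun n => integrable_mul_of_memℒp_two (humem n) hg₀mem
    have hint2 : ∀ n, Integrable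
        (fun x => f n (φn n x) * (|(fderiv ℝ (φn n) x).det| * G (φn n x)))
        (volume.restrict Ω) := fun n => integrable_mul_of_memℒp_two (humem n) (hwmem n)
    have hsplit : ∀ n, ∫ x in Ω, f n (φn n x) *
          (g₀ x - |(fderiv ℝ (φn n) x).det| * G (φn n x)) =
        (∫ x in Ω, f n (φn n x) * g₀ x) - ∫ y in Ω, f n y * G y := by
      intro n
      rw [hIdent n]
      rw [show (fun x => f n (φn n x) *
          (g₀ x - |(fderiv ℝ (φn n) x).det| * G (φn n x))) = fun x =>
          f n (φn n x) * g₀ x -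
            f n (φn n x) * (|(fderiv ℝ (φn n) x).det| * G (φn n x)) from
        funext fun x => by ring]
      exact integral_sub (hint1 n) (hint2 n)
    -- L² convergence of the test functions
    have hpow2 : ∀ a : ℝ, a ^ ((2:ℝ≥0∞).toReal) = a ^ (2:ℕ) := by
      intro a
      rw [show ((2:ℝ≥0∞).toReal) = ((2:ℕ):ℝ) by norm_num, Real.rpow_natCast]
    have hDCT : Tendsto (fun n => ∫ x in Ω,
        ‖g₀ x - |(fderiv ℝ (φn n) x).det| * G (φn n x)‖ ^ (2:ℕ)) atTop (𝓝 0) := by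
      have h0 : (0:ℝ) = ∫ x in Ω, (0:ℝ) := by simp
      rw [h0]
      refine tendsto_integral_of_dominated_convergence
        (fun _ => (‖g₀‖ + C * (‖g₀‖ * c⁻¹)) ^ (2:ℕ)) ?_ (integrable_const _) ?_ ?_
      · intro n
        exact ((((hvmem n).aestronglyMeasurable.norm).aemeasurable.pow_const
          2).aestronglyMeasurable)
      · intro n
        filter_upwards [hwbd n] with x hx
        have h1 : ‖g₀ x - |(fderiv ℝ (φn n) x).det| * G (φn n x)‖ ≤
            ‖g₀‖ + C * (‖g₀‖ * c⁻¹) := by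
          refine (norm_sub_le _ _).trans (add_le_add ?_ hx)
          simpa [Real.norm_eq_abs] using g₀.norm_coe_le_norm x
        have h2 : (0:ℝ) ≤ ‖g₀ x - |(fderiv ℝ (φn n) x).det| * G (φn n x)‖ := norm_nonneg _
        rw [Real.norm_eq_abs, abs_of_nonneg (by positivity)]
        exact pow_le_pow_left₀ h2 h1 2
      · filter_upwards [ae_restrict_mem hΩm] with x hx
        have hφₙx : Tendsto (fun n => φn n x) atTop (𝓝 (φ x)) := hconv.tendsto_at hx
        have hφxΩ : φ x ∈ Ω := hφ.2.mapsTo hx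
        have hdet : Tendsto (fun n => |(fderiv ℝ (φn n) x).det|) atTop
            (𝓝 |(fderiv ℝ φ x).det|) :=
          ((continuous_abs.comp ContinuousLinearMap.continuous_det).continuousAt).tendsto.comp
            (hconvD.tendsto_at hx)
        have hout : ContinuousAt (fun p => (g₀ p : ℝ) * |(fderiv ℝ φ p).det|⁻¹) (ψ (φ x)) := by
          rw [hinv.1 hx]
          refine ContinuousAt.mul g₀.continuous.continuousAt ?_
          refine ContinuousAt.inv₀ ?_ (ne_of_gt (hdetpos x hx))
          exact ((continuous_abs.comp (ContinuousLinearMap.continuous_det.comp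
            (hφ.1.continuous_fderiv one_ne_zero))).continuousAt)
        have hGcont : ContinuousAt G (φ x) := by
          have := hout.comp (hψcont (φ x) hφxΩ)
          exact this
        have hGlim : Tendsto (fun n => G (φn n x)) atTop (𝓝 (G (φ x))) :=
          hGcont.tendsto.comp hφₙx
        have hwlim : Tendsto (fun n => |(fderiv ℝ (φn n) x).det| * G (φn n x)) atTop
            (𝓝 (g₀ x)) := by
          have h5 := hdet.mul hGlim
          have hval : |(fderiv ℝ φ x).det| * G (φ x) = g₀ x := by
            have h2 : |(fderiv ℝ φ x).det| ≠ 0 := ne_of_gt (hdetpos x hx)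
            rw [hGdef]
            simp only [hinv.1 hx]
            rw [mul_comm (g₀ x), ← mul_assoc, mul_inv_cancel₀ h2, one_mul]
          rwa [hval] at h5
        have hvlim : Tendsto (fun n =>
            g₀ x - |(fderiv ℝ (φn n) x).det| * G (φn n x)) atTop (𝓝 0) := by
          have h7 : Tendsto (fun _ : ℕ => g₀ x) atTop (𝓝 (g₀ x)) := tendsto_const_nhds
          simpa using h7.sub hwlim
        have := (hvlim.norm).pow 2
        simpa using this
    set ev : ℕ → ℝ := fun n => (eLpNorm
        (fun x => g₀ x - |(fderiv ℝ (φn n) x).det| * G (φn n x)) 2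
        (volume.restrict Ω)).toReal with hevdef
    have hevEq : ∀ n, ev n = (∫ x in Ω,
        ‖g₀ x - |(fderiv ℝ (φn n) x).det| * G (φn n x)‖ ^ (2:ℕ)) ^ (2:ℝ)⁻¹ := by
      intro n
      rw [hevdef]
      simp only
      rw [(hvmem n).eLpNorm_eq_integral_rpow_norm two_ne_zero ENNReal.ofNat_ne_top]
      rw [ENNReal.toReal_ofReal (by positivity)]
      have h8 : ∀ a : ℝ, a ^ ((2:ℝ≥0∞).toReal) = a ^ (2:ℕ) := hpow2
      simp only [ENNReal.toReal_ofNat] at h8 ⊢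
      simp only [h8]
    have hevconv : Tendsto ev atTop (𝓝 0) := by
      have hcont : ContinuousAt (fun t : ℝ => t ^ (2:ℝ)⁻¹) 0 :=
        Real.continuousAt_rpow_const 0 _ (Or.inr (by norm_num))
      have h6 := hcont.tendsto.comp hDCT
      rw [show ((0:ℝ) ^ (2:ℝ)⁻¹) = 0 from Real.zero_rpow (by norm_num)] at h6
      refine h6.congr fun n => ?_
      rw [hevEq n]
      rfl
    -- squeeze
    have habs : ∀ n, |∫ x in Ω, f n (φn n x) *
        (g₀ x - |(fderiv ℝ (φn n) x).det| * G (φn n x))| ≤ (κ * M₀) * ev n := by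
      intro n
      refine (holder_two (humem n) (hvmem n)).trans ?_
      exact mul_le_mul_of_nonneg_right (huB n) ENNReal.toReal_nonneg
    have h1 : Tendsto (fun n => ∫ x in Ω, f n (φn n x) *
        (g₀ x - |(fderiv ℝ (φn n) x).det| * G (φn n x))) atTop (𝓝 0) := by
      refine squeeze_zero_norm (a := fun n => (κ * M₀) * ev n) (fun n => ?_) ?_
      · rw [Real.norm_eq_abs]; exact habs n
      · simpa using hevconv.const_mul (κ * M₀)
    have h2 := hweak G hGmem
    have h3 := h1.add h2
    rw [zero_add] at h3
    rw [← hLG]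
    refine h3.congr fun n => ?_
    rw [hsplit n]
    ring
  -- density argument
  intro g hg
  haveI : (volume.restrict Ω).WeaklyRegular :=
    MeasureTheory.Measure.WeaklyRegular.restrict_of_measure_ne_top hfin.ne
  rw [Metric.tendsto_atTop]
  intro ε hε
  set D : ℝ := κ * M₀ + Kl + 1 with hDdef
  have hD0 : 0 < D := by positivity
  have hδpos : 0 < ε / (4 * D) := by positivity
  obtain ⟨g₀, hg₀close, hg₀mem⟩ := hg.exists_boundedContinuous_eLpNorm_sub_le
    ENNReal.ofNat_ne_top (ne_of_gt (ENNReal.ofReal_pos.mpr hδpos))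
  have hsubmem : MemLp (fun x => g x - g₀ x) 2 (volume.restrict Ω) := hg.sub hg₀mem
  have hsubnorm : (eLpNorm (fun x => g x - g₀ x) 2 (volume.restrict Ω)).toReal ≤ ε / (4 * D) := by
    refine ENNReal.toReal_le_of_le_ofReal hδpos.le ?_
    exact hg₀close
  obtain ⟨N, hN⟩ := Metric.tendsto_atTop.mp (KEY g₀) (ε / 2) (by positivity)
  refine ⟨N, fun n hn => ?_⟩
  have hi1 : Integrable (fun x => f n (φn n x) * g₀ x) (volume.restrict Ω) :=
    integrable_mul_of_memℒp_two (humem n)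
      (MemLp.of_bound g₀.continuous.aestronglyMeasurable ‖g₀‖
        (Filter.Eventually.of_forall fun x => g₀.norm_coe_le_norm x))
  have hi2 : Integrable (fun x => f n (φn n x) * (g x - g₀ x)) (volume.restrict Ω) :=
    integrable_mul_of_memℒp_two (humem n) hsubmem
  have hi3 : Integrable (fun x => flim (φ x) * g₀ x) (volume.restrict Ω) :=
    integrable_mul_of_memℒp_two hflimcomp
      (MemLp.of_bound g₀.continuous.aestronglyMeasurable ‖g₀‖
        (Filter.Eventually.of_forall fun x => g₀.norm_coe_le_norm x))
  have hi4 : Integrable (fun x => flim (φ x) * (g x - g₀ x)) (volume.restrict Ω) :=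
    integrable_mul_of_memℒp_two hflimcomp hsubmem
  have e1 : ∫ x in Ω, f n (φn n x) * g x =
      (∫ x in Ω, f n (φn n x) * g₀ x) + ∫ x in Ω, f n (φn n x) * (g x - g₀ x) := by
    rw [← integral_add hi1 hi2]
    refine integral_congr_ae (Filter.Eventually.of_forall fun x => ?_)
    ring
  have e2 : ∫ x in Ω, flim (φ x) * g x =
      (∫ x in Ω, flim (φ x) * g₀ x) + ∫ x in Ω, flim (φ x) * (g x - g₀ x) := by
    rw [← integral_add hi3 hi4]
    refine integral_congr_ae (Filter.Eventually.of_forall fun x => ?_)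
    ring
  have hb1 : |∫ x in Ω, f n (φn n x) * (g x - g₀ x)| ≤ ε / 4 := by
    have h1 := holder_two (humem n) hsubmem
    have h2 : (eLpNorm (fun x => f n (φn n x)) 2 (volume.restrict Ω)).toReal *
        (eLpNorm (fun x => g x - g₀ x) 2 (volume.restrict Ω)).toReal ≤ D * (ε / (4 * D)) := by
      refine mul_le_mul ?_ hsubnorm ENNReal.toReal_nonneg hD0.le
      refine (huB n).trans ?_
      rw [hDdef]
      linarith
    have h3 : D * (ε / (4 * D)) = ε / 4 := by
      field_simp
    exact h1.trans (h2.trans_eq h3)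
  have hb2 : |∫ x in Ω, flim (φ x) * (g x - g₀ x)| ≤ ε / 4 := by
    have h1 := holder_two hflimcomp hsubmem
    have h2 : Kl * (eLpNorm (fun x => g x - g₀ x) 2 (volume.restrict Ω)).toReal ≤
        D * (ε / (4 * D)) := by
      refine mul_le_mul ?_ hsubnorm ENNReal.toReal_nonneg hD0.le
      rw [hDdef]
      nlinarith [mul_nonneg hκ0 hM₀0]
    have h3 : D * (ε / (4 * D)) = ε / 4 := by
      field_simp
    rw [← hKl] at h1
    exact h1.trans (h2.trans_eq h3)
  have hmid : |(∫ x in Ω, f n (φn n x) * g₀ x) - ∫ x in Ω, flim (φ x) * g₀ x| < ε / 2 := by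
    have := hN n hn
    rwa [Real.dist_eq] at this
  rw [Real.dist_eq, e1, e2]
  calc |((∫ x in Ω, f n (φn n x) * g₀ x) + ∫ x in Ω, f n (φn n x) * (g x - g₀ x)) -
        ((∫ x in Ω, flim (φ x) * g₀ x) + ∫ x in Ω, flim (φ x) * (g x - g₀ x))|
      ≤ |(∫ x in Ω, f n (φn n x) * g₀ x) - ∫ x in Ω, flim (φ x) * g₀ x| +
        (|∫ x in Ω, f n (φn n x) * (g x - g₀ x)| + |∫ x in Ω, flim (φ x) * (g x - g₀ x)|) := by
        have habs1 := abs_add_le ((∫ x in Ω, f n (φn n x) * g₀ x) - ∫ x in Ω, flim (φ x) * g₀ x)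
          ((∫ x in Ω, f n (φn n x) * (g x - g₀ x)) - ∫ x in Ω, flim (φ x) * (g x - g₀ x))
        have habs2 := abs_sub (∫ x in Ω, f n (φn n x) * (g x - g₀ x))
          (∫ x in Ω, flim (φ x) * (g x - g₀ x))
        have heq : ((∫ x in Ω, f n (φn n x) * g₀ x) + ∫ x in Ω, f n (φn n x) * (g x - g₀ x)) -
            ((∫ x in Ω, flim (φ x) * g₀ x) + ∫ x in Ω, flim (φ x) * (g x - g₀ x)) =
            ((∫ x in Ω, f n (φn n x) * g₀ x) - ∫ x in Ω, flim (φ x) * g₀ x) +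
            ((∫ x in Ω, f n (φn n x) * (g x - g₀ x)) -
              ∫ x in Ω, flim (φ x) * (g x - g₀ x)) := by ring
        rw [heq]
        exact habs1.trans (by linarith)
    _ < ε / 2 + (ε / 4 + ε / 4) := by
        have := add_le_add hb1 hb2
        linarith
    _ = ε := by ring
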